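/- For every automorphism φ of a finitely generated free group F with basis A, and every u ∈ F, the image φ(C¹_u) of the cylinder C¹_u under the induced boundary homeomorphism is a finite union of cylinders: there exists a finite set U ⊂ F with φ(C¹_u) = ⋃_{u' ∈ U} C¹_{u'}. -/

import Mathlib

open List

variable {A : Type*} [Fintype A] [DecidableEq A]

/-- The formal inverse of a letter in `A ∪ A⁻¹`, encoded as `A × Bool`. -/
def Linv (x : A × Bool) : A × Bool := (x.1, !x.2)

/-- A finite word is reduced if no letter is followed by its inverse. -/
def RedWord (w : List (A × Bool)) : Prop := w.Chain' (fun x y => y ≠ Linv x)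

/-- An infinite word is reduced if no letter is followed by its inverse. -/
def InfRed (X : ℕ → A × Bool) : Prop := ∀ n, X (n + 1) ≠ Linv (X n)

/-- The boundary `∂F(A)`: the set of infinite reduced words. -/
abbrev Bdry (A : Type*) := {X : ℕ → A × Bool // InfRed X}

/-- The prefix of length `n` of an infinite word. -/
def wpre (X : ℕ → A × Bool) (n : ℕ) : List (A × Bool) := (List.range n).map X

/-- The word length `|g|_A` of an element of the free group. -/
def wlen (g : FreeGroup A) : ℕ := (FreeGroup.toWord g).length

/-- The cylinder `C¹_g` for a group element `g`, via its reduced word. -/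
def CylF (g : FreeGroup A) : Set (Bdry A) := {X | wpre X.val (wlen g) = g.toWord}

/-- The cylinder `C¹_l` for a (reduced) word `l`. -/
def CylL (l : List (A × Bool)) : Set (Bdry A) := {X | wpre X.val l.length = l}

/-- `w|_k` : erase the last `k` letters of the word `w`. -/
def del (l : List (A × Bool)) (k : ℕ) : List (A × Bool) := l.take (l.length - k)

/-- `u|^k` : the set of reduced words obtained from `u` by appending `k` letters. -/
def extW (u : List (A × Bool)) (k : ℕ) : Set (List (A × Bool)) :=
  {v | RedWord v ∧ u <+: v ∧ v.length = u.length + k}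

/-- The size `S(φ)`: the maximum of `|φ(a)|` and `|φ⁻¹(a)|` over all `a ∈ A`. -/
def fsize (φ : FreeGroup A ≃* FreeGroup A) : ℕ :=
  Finset.univ.sup fun a : A =>
    max (wlen (φ (FreeGroup.of a))) (wlen (φ.symm (FreeGroup.of a)))

/-- The bounded cancellation constant `C(φ)`: the least `C` with
`|φ(u)| + |φ(v)| ≤ |φ(uv)| + C` for all `u, v`. -/
noncomputable def fcancel (φ : FreeGroup A ≃* FreeGroup A) : ℕ :=
  sInf {C | ∀ u v : FreeGroup A, wlen (φ u) + wlen (φ v) ≤ wlen (φ (u * v)) + C}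

/-- The graph of the continuous extension of `f` to the boundary:
`Y` is the limit of the words `f(X|_m)` as `m → ∞`. -/
def LimMap (f : FreeGroup A → FreeGroup A) (X Y : ℕ → A × Bool) : Prop :=
  ∀ n, ∃ m₀, ∀ m ≥ m₀, ((f (FreeGroup.mk (wpre X m))).toWord.take n) = wpre Y n

/-- The image of a subset of the boundary under the boundary extension of `f`. -/
def bim (f : FreeGroup A → FreeGroup A) (S : Set (Bdry A)) : Set (Bdry A) :=
  {Y | ∃ X ∈ S, LimMap f X.val Y.val}

namespace CylProof
open FreeGroup
set_option linter.unusedSectionVars false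

variable {A : Type*} [Fintype A] [DecidableEq A]

@[simp] lemma Linv_Linv (x : A × Bool) : Linv (Linv x) = x := by
  simp [Linv]

lemma linv_cond {x y : A × Bool} (h : x.1 = y.1 ∧ x.2 = !y.2) : x = Linv y := by
  cases x; cases y; simp_all [Linv]

lemma reduce_eq_self {w : List (A × Bool)} (h : RedWord w) : reduce w = w := by
  induction w with
  | nil => rfl
  | cons x l ih =>
    have hl : RedWord l := h.tail
    rw [reduce.cons, ih hl]
    cases l with
    | nil => rfl
    | cons y t =>
      have hxy : y ≠ Linv x := (List.isChain_cons_cons.mp h).1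
      have : ¬ (x.1 = y.1 ∧ x.2 = !y.2) := by
        intro hc
        apply hxy
        have := linv_cond hc
        rw [this]; simp
      simp only [this, if_false]

lemma redWord_of_reduce {w : List (A × Bool)} (h : reduce w = w) : RedWord w := by
  induction w with
  | nil => exact List.isChain_nil
  | cons x l ih =>
    rw [reduce.cons] at h
    rcases hr : reduce (L := l) with _ | ⟨hd, tl⟩ <;> rw [hr] at h <;> simp only [] at h
    · injection h with h1 h2
      rw [← h2]
      exact List.isChain_singleton x
    · by_cases hc : x.1 = hd.1 ∧ x.2 = !hd.2
      · rw [if_pos hc] at h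
        exfalso
        have hlen : (reduce l).length ≤ l.length := (Red.sublist reduce.red).length_le
        rw [hr] at hlen
        have := congrArg List.length h
        simp at this hlen
        omega
      · rw [if_neg hc] at h
        injection h with h1 h2
        have hred : RedWord l := ih (by rw [hr]; exact h2)
        rw [← h2]
        refine List.isChain_cons_cons.mpr ⟨?_, by rw [h2]; exact hred⟩
        intro hbad
        exact hc ⟨by rw [hbad]; rfl, by rw [hbad]; simp [Linv]⟩

lemma redWord_toWord (g : FreeGroup A) : RedWord g.toWord :=
  redWord_of_reduce (reduce_toWord g)

lemma toWord_mk_red {w : List (A × Bool)} (h : RedWord w) : (mk w).toWord = w := by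
  rw [toWord_mk, reduce_eq_self h]

lemma wlen_mk_red {w : List (A × Bool)} (h : RedWord w) : wlen (mk w) = w.length := by
  rw [wlen, toWord_mk_red h]

lemma redWord_invRev {w : List (A × Bool)} (h : RedWord w) : RedWord (invRev w) := by
  unfold RedWord invRev List.Chain' at *
  rw [List.isChain_reverse, List.isChain_map]
  refine List.IsChain.imp ?_ h
  intro a b hab
  simp only [flip, Linv, ne_eq, Prod.ext_iff, Bool.not_not] at *
  exact fun ⟨h1, h2⟩ => hab ⟨h1.symm, h2.symm⟩

lemma wlen_inv (g : FreeGroup A) : wlen g⁻¹ = wlen g := by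
  rw [wlen, toWord_inv, invRev_length]; rfl

lemma wlen_mul_le (g h : FreeGroup A) : wlen (g * h) ≤ wlen g + wlen h := by
  have := (toWord_mul_sublist g h).length_le
  simpa [wlen] using this

lemma wlen_mk_le (w : List (A × Bool)) : wlen (mk w) ≤ w.length := norm_mk_le

@[simp] lemma wlen_one : wlen (1 : FreeGroup A) = 0 := by simp [wlen]

lemma wlen_eq_zero {g : FreeGroup A} (h : wlen g = 0) : g = 1 := by
  rw [wlen, List.length_eq_zero_iff, toWord_eq_nil_iff] at h
  exact h

end CylProof

namespace CylProof
variable {A : Type*} [Fintype A] [DecidableEq A]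
open FreeGroup
set_option linter.unusedSectionVars false

lemma invRev_cons (x : A × Bool) (l : List (A × Bool)) :
    invRev (x :: l) = invRev l ++ [Linv x] := by
  simp [invRev, Linv]

lemma mk_invRev_append (a b : List (A × Bool)) : mk (invRev a ++ b) = (mk a)⁻¹ * mk b := by
  rw [← mul_mk, ← inv_mk]

lemma mk_mid (p a' b' : List (A × Bool)) :
    (mk (p ++ a'))⁻¹ * mk (p ++ b') = (mk a')⁻¹ * mk b' := by
  rw [← mul_mk, ← mul_mk, mul_inv_rev]
  group

lemma lcp_exists : ∀ (a b : List (A × Bool)), RedWord a → RedWord b →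
    ∃ p a' b', a = p ++ a' ∧ b = p ++ b' ∧ RedWord (invRev a' ++ b') := by
  intro a
  induction a with
  | nil =>
    intro b _ hb
    exact ⟨[], [], b, rfl, rfl, by simpa [invRev] using hb⟩
  | cons x a₁ ih =>
    intro b ha hb
    cases b with
    | nil =>
      refine ⟨[], x :: a₁, [], rfl, rfl, ?_⟩
      rw [List.append_nil]
      exact redWord_invRev ha
    | cons y b₁ =>
      by_cases hxy : x = y
      · subst hxy
        obtain ⟨p, a', b', h1, h2, h3⟩ := ih b₁ ha.tail hb.tail
        exact ⟨x :: p, a', b', by rw [List.cons_append, ← h1], by rw [List.cons_append, ← h2], h3⟩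
      · refine ⟨[], x :: a₁, y :: b₁, rfl, rfl, ?_⟩
        rw [invRev_cons]
        refine List.isChain_append.mpr ⟨?_, hb, ?_⟩
        · rw [← invRev_cons]; exact redWord_invRev ha
        · intro c hc d hd
          rw [List.getLast?_concat] at hc
          simp only [List.head?_cons, Option.mem_def, Option.some.injEq] at hc hd
          subst hc; subst hd
          rw [Linv_Linv]
          exact fun hbad => hxy hbad.symm

lemma toWord_inv_mul {a b : List (A × Bool)} (ha : RedWord a) (hb : RedWord b) :
    ∃ p a' b', a = p ++ a' ∧ b = p ++ b' ∧
      ((mk a)⁻¹ * mk b).toWord = invRev a' ++ b' := by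
  obtain ⟨p, a', b', h1, h2, h3⟩ := lcp_exists a b ha hb
  refine ⟨p, a', b', h1, h2, ?_⟩
  rw [h1, h2, mk_mid, ← mk_invRev_append, toWord_mk_red h3]

lemma take_eq_of_close {a b : List (A × Bool)} (ha : RedWord a) (hb : RedWord b) {n : ℕ}
    (h : 2 * n + wlen ((mk a)⁻¹ * mk b) ≤ a.length + b.length) : a.take n = b.take n := by
  obtain ⟨p, a', b', h1, h2, h3⟩ := toWord_inv_mul ha hb
  have hw : wlen ((mk a)⁻¹ * mk b) = a'.length + b'.length := by
    rw [wlen, h3, List.length_append, invRev_length]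
  have hn : n ≤ p.length := by
    subst h1; subst h2
    simp only [List.length_append] at h
    omega
  rw [h1, h2, List.take_append_of_le_length hn, List.take_append_of_le_length hn]

lemma redWord_suffix {a r : List (A × Bool)} (h : RedWord (a ++ r)) : RedWord r :=
  (List.isChain_append.mp h).2.1

lemma redWord_prefix {a r : List (A × Bool)} (h : RedWord (a ++ r)) : RedWord a :=
  (List.isChain_append.mp h).1

lemma wlen_inv_mul_prefix {a b : List (A × Bool)} (hab : a <+: b) (hb : RedWord b) :
    wlen ((mk a)⁻¹ * mk b) = b.length - a.length := by
  obtain ⟨r, rfl⟩ := hab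
  have hr : RedWord r := redWord_suffix hb
  rw [← mul_mk, inv_mul_cancel_left, wlen_mk_red hr, List.length_append]
  omega

lemma wlen_single (ψ : FreeGroup A →* FreeGroup A) {S : ℕ}
    (hS : ∀ a : A, wlen (ψ (of a)) ≤ S) (x : A × Bool) : wlen (ψ (mk [x])) ≤ S := by
  obtain ⟨a, b⟩ := x
  cases b
  · have : (mk [(a, false)] : FreeGroup A) = (of a)⁻¹ := by
      rw [← inv_inv (mk [(a, false)]), inv_mk]
      norm_num [invRev, FreeGroup.of]
    rw [this, ψ.map_inv, wlen_inv]
    exact hS a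
  · exact hS a

lemma wlen_map_le (ψ : FreeGroup A →* FreeGroup A) {S : ℕ}
    (hS : ∀ a : A, wlen (ψ (of a)) ≤ S) (g : FreeGroup A) : wlen (ψ g) ≤ S * wlen g := by
  have key : ∀ w : List (A × Bool), wlen (ψ (mk w)) ≤ S * w.length := by
    intro w
    induction w with
    | nil =>
      have : (mk ([] : List (A × Bool)) : FreeGroup A) = 1 := by rw [← FreeGroup.one_eq_mk]
      simp [this]
    | cons x t ih =>
      have hsplit : (mk (x :: t) : FreeGroup A) = mk [x] * mk t := by
        rw [mul_mk]; rfl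
      rw [hsplit, ψ.map_mul]
      calc wlen (ψ (mk [x]) * ψ (mk t)) ≤ wlen (ψ (mk [x])) + wlen (ψ (mk t)) :=
            wlen_mul_le _ _
        _ ≤ S + S * t.length := add_le_add (wlen_single ψ hS x) ih
        _ = S * (x :: t).length := by rw [List.length_cons]; ring
  calc wlen (ψ g) = wlen (ψ (mk g.toWord)) := by rw [mk_toWord]
    _ ≤ S * g.toWord.length := key _
    _ = S * wlen g := rfl

end CylProof

namespace CylProof
variable {A : Type*} [Fintype A] [DecidableEq A]
open FreeGroup
set_option linter.unusedSectionVars false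

lemma equiv_inv_mul (ψ : FreeGroup A ≃* FreeGroup A) (a b : FreeGroup A) :
    ψ (a⁻¹ * b) = (ψ a)⁻¹ * ψ b := by
  simp

lemma head?_append_left {α : Type*} {l l' : List α} (h : l ≠ []) :
    (l ++ l').head? = l.head? := by
  cases l with
  | nil => exact absurd rfl h
  | cons e es => simp

lemma mk_pair_cancel (d : A × Bool) : (mk [d, Linv d] : FreeGroup A) = 1 := by
  have h : ([d, Linv d] : List (A × Bool)) = [d] ++ invRev [d] := by
    simp [invRev, Linv]
  rw [h, ← mul_mk, ← inv_mk, mul_inv_cancel]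

lemma head?_invRev {w : List (A × Bool)} (hne : w ≠ []) :
    (invRev w).head? = some (Linv (w.getLast hne)) := by
  rw [invRev, List.head?_reverse, List.getLast?_map,
    List.getLast?_eq_getLast hne]
  rfl

lemma toWord_mul_eq {g h : FreeGroup A} (hgh : wlen (g * h) = wlen g + wlen h) :
    (g * h).toWord = g.toWord ++ h.toWord := by
  have hsub : (g * h).toWord <+ g.toWord ++ h.toWord := toWord_mul_sublist g h
  exact hsub.eq_of_length (by rw [List.length_append]; exact hgh)

lemma head_step {g x x' : FreeGroup A} (hx : x ≠ g) (hx' : x' ≠ g)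
    (hd : wlen (x⁻¹ * x') ≤ 1) :
    ((g⁻¹ * x).toWord).head? = ((g⁻¹ * x').toWord).head? := by
  rcases hw : (x⁻¹ * x').toWord with _ | ⟨c, rest⟩
  · have : x' = x := (inv_mul_eq_one.mp (toWord_eq_nil_iff.mp hw)).symm
    rw [this]
  · have hrest : rest = [] := by
      have : (x⁻¹ * x').toWord.length ≤ 1 := hd
      rw [hw] at this
      simpa using this
    subst hrest
    have hxx' : x' = x * mk [c] := by
      have hc : mk [c] = x⁻¹ * x' := by rw [← hw, mk_toWord]
      rw [hc, mul_inv_cancel_left]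
    set w := (g⁻¹ * x).toWord with hwdef
    have hwred : RedWord w := redWord_toWord _
    have hwne : w ≠ [] := by
      intro h0
      exact hx (inv_mul_eq_one.mp (toWord_eq_nil_iff.mp (hwdef ▸ h0))).symm
    have hmk : g⁻¹ * x' = mk (w ++ [c]) := by
      rw [hxx', ← mul_assoc, ← mul_mk]
      congr 1
      rw [hwdef, mk_toWord]
    by_cases hcan : c = Linv (w.getLast hwne)
    · have hwsplit : w.dropLast ++ [w.getLast hwne] = w := List.dropLast_append_getLast hwne
      have hmk2 : g⁻¹ * x' = mk w.dropLast := by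
        rw [hmk]
        conv_lhs => rw [← hwsplit, List.append_assoc, List.singleton_append]
        rw [← mul_mk, hcan, mk_pair_cancel, mul_one]
      have hdlred : RedWord w.dropLast := by
        rw [← hwsplit] at hwred
        exact redWord_prefix hwred
      have hdlne : w.dropLast ≠ [] := by
        intro h0
        apply hx'
        have : g⁻¹ * x' = 1 := by rw [hmk2, h0, ← FreeGroup.one_eq_mk]
        exact (inv_mul_eq_one.mp this).symm
      rw [hmk2, toWord_mk_red hdlred]
      conv_lhs => rw [← hwsplit]
      rw [head?_append_left hdlne]
    · have hred : RedWord (w ++ [c]) := by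
        refine List.isChain_append.mpr ⟨hwred, List.isChain_singleton c, ?_⟩
        intro p hp q hq
        rw [List.getLast?_eq_getLast hwne] at hp
        simp only [List.head?_cons, Option.mem_def, Option.some.injEq] at hp hq
        subst hp; subst hq
        exact hcan
      rw [hmk, toWord_mk_red hred, head?_append_left hwne]

lemma head_walk (g : FreeGroup A) : ∀ (v : List (A × Bool)) (x : FreeGroup A),
    (∀ t ≤ v.length, x * mk (v.take t) ≠ g) →
    ((g⁻¹ * x).toWord).head? = ((g⁻¹ * (x * mk v)).toWord).head? := by
  intro v
  induction v with
  | nil =>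
    intro x _
    rw [show (mk [] : FreeGroup A) = 1 from FreeGroup.one_eq_mk.symm, mul_one]
  | cons c v₁ ih =>
    intro x h
    have h0 : x ≠ g := by simpa [← FreeGroup.one_eq_mk] using h 0 (Nat.zero_le _)
    have h1 : x * mk [c] ≠ g := by simpa using h 1 (by simp)
    have hdist : wlen (x⁻¹ * (x * mk [c])) ≤ 1 := by
      rw [inv_mul_cancel_left]
      exact wlen_mk_le [c]
    have hstep := head_step h0 h1 hdist
    rw [hstep]
    have hrec := ih (x * mk [c]) ?_
    · rw [hrec, mul_assoc, mul_mk]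
      rfl
    · intro t ht
      have := h (t + 1) (by simpa using Nat.succ_le_succ ht)
      rw [List.take_succ_cons] at this
      rw [mul_assoc, mul_mk]
      exact this

lemma bounded_cancel (ψ : FreeGroup A ≃* FreeGroup A) (S : ℕ)
    (h1 : ∀ g : FreeGroup A, wlen (ψ g) ≤ S * wlen g)
    (h2 : ∀ g : FreeGroup A, wlen (ψ.symm g) ≤ S * wlen g)
    (g h : FreeGroup A) (hgh : wlen (g * h) = wlen g + wlen h) :
    wlen (ψ g) + wlen (ψ h) ≤ wlen (ψ (g * h)) + 2 * (S * S) := by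
  by_cases hg1 : g = 1
  · subst hg1; simp
  by_cases hh1 : h = 1
  · subst hh1; simp
  set W := (ψ (g * h)).toWord with hWdef
  set L := W.length with hLdef
  have hWred : RedWord W := redWord_toWord _
  have key : ∃ j ≤ L, wlen ((ψ.symm (mk (W.take j)))⁻¹ * g) ≤ S := by
    by_contra hcon
    push_neg at hcon
    have main : ∀ j, j ≤ L →
        ((g⁻¹ * ψ.symm (mk (W.take 0))).toWord).head?
          = ((g⁻¹ * ψ.symm (mk (W.take j))).toWord).head? := by
      intro j
      induction j with
      | zero => intro _; rfl
      | succ j ihj =>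
        intro hjL
        have hj : j ≤ L := Nat.le_of_succ_le hjL
        rw [ihj hj]
        set x := ψ.symm (mk (W.take j)) with hxdef
        set x' := ψ.symm (mk (W.take (j + 1))) with hx'def
        set v := (x⁻¹ * x').toWord with hvdef
        have hpre : W.take j <+: W.take (j + 1) :=
          List.take_prefix_take_left (l := W) (by omega)
        have hdle : wlen ((mk (W.take j))⁻¹ * mk (W.take (j + 1))) ≤ 1 := by
          rw [wlen_inv_mul_prefix hpre (hWred.take _)]
          simp [List.length_take]
          omega
        have hvlen : v.length ≤ S := by
          have hx : x⁻¹ * x' = ψ.symm ((mk (W.take j))⁻¹ * mk (W.take (j + 1))) := by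
            rw [hxdef, hx'def, equiv_inv_mul]
          calc v.length = wlen (x⁻¹ * x') := rfl
            _ = wlen (ψ.symm ((mk (W.take j))⁻¹ * mk (W.take (j + 1)))) := by rw [hx]
            _ ≤ S * wlen ((mk (W.take j))⁻¹ * mk (W.take (j + 1))) := h2 _
            _ ≤ S * 1 := Nat.mul_le_mul_left S hdle
            _ = S := Nat.mul_one S
        have havoid : ∀ t ≤ v.length, x * mk (v.take t) ≠ g := by
          intro t ht heq
          have hb : wlen (x⁻¹ * g) ≤ S := by
            rw [← heq, inv_mul_cancel_left]
            refine le_trans (wlen_mk_le _) ?_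
            rw [List.length_take]
            omega
          exact absurd hb (not_le.mpr (hcon j hj))
        have hw := head_walk g v x havoid
        rw [hw]
        have hxv : x * mk v = x' := by rw [hvdef, mk_toWord, mul_inv_cancel_left]
        rw [hxv]
    have hmain := main L le_rfl
    have hend0 : g⁻¹ * ψ.symm (mk (W.take 0)) = g⁻¹ := by
      rw [List.take_zero, ← FreeGroup.one_eq_mk, _root_.map_one, mul_one]
    have hendL : g⁻¹ * ψ.symm (mk (W.take L)) = h := by
      rw [hLdef, List.take_length, hWdef, mk_toWord, MulEquiv.symm_apply_apply,
        inv_mul_cancel_left]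
    rw [hend0, hendL] at hmain
    have hgne : g.toWord ≠ [] := fun h0 => hg1 (toWord_eq_nil_iff.mp h0)
    have hhne : h.toWord ≠ [] := fun h0 => hh1 (toWord_eq_nil_iff.mp h0)
    rw [toWord_inv, head?_invRev hgne] at hmain
    have hjoin : RedWord (g.toWord ++ h.toWord) := by
      rw [← toWord_mul_eq hgh]
      exact redWord_toWord _
    have hj3 := (List.isChain_append.mp hjoin).2.2
    rcases hh : h.toWord with _ | ⟨c, rest⟩
    · exact hhne hh
    · rw [hh] at hmain
      simp only [List.head?_cons, Option.some.injEq] at hmain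
      refine hj3 (g.toWord.getLast hgne) ?_ c ?_ hmain.symm
      · simp [List.getLast?_eq_getLast hgne]
      · rw [hh]; simp
  obtain ⟨j, hjL, hnear⟩ := key
  set yj := mk (W.take j) with hyj
  have k1 : wlen (yj⁻¹ * ψ g) ≤ S * S := by
    have hid : yj⁻¹ * ψ g = ψ ((ψ.symm yj)⁻¹ * g) := by
      rw [equiv_inv_mul, MulEquiv.apply_symm_apply]
    rw [hid]
    calc wlen (ψ ((ψ.symm yj)⁻¹ * g)) ≤ S * wlen ((ψ.symm yj)⁻¹ * g) := h1 _
      _ ≤ S * S := Nat.mul_le_mul_left S hnear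
  have k2 : wlen yj ≤ j := by
    refine le_trans (wlen_mk_le _) ?_
    rw [List.length_take]
    omega
  have k3 : wlen (yj⁻¹ * ψ (g * h)) ≤ L - j := by
    have hid : yj⁻¹ * ψ (g * h) = mk (W.drop j) := by
      have : ψ (g * h) = mk (W.take j ++ W.drop j) := by
        rw [List.take_append_drop, hWdef, mk_toWord]
      rw [this, ← mul_mk, hyj, inv_mul_cancel_left]
    rw [hid]
    refine le_trans (wlen_mk_le _) ?_
    rw [List.length_drop]
  have e1 : wlen (ψ g) ≤ j + S * S := by
    have hid : ψ g = yj * (yj⁻¹ * ψ g) := by group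
    calc wlen (ψ g) = wlen (yj * (yj⁻¹ * ψ g)) := by rw [← hid]
      _ ≤ wlen yj + wlen (yj⁻¹ * ψ g) := wlen_mul_le _ _
      _ ≤ j + S * S := add_le_add k2 k1
  have e2 : wlen (ψ h) ≤ S * S + (L - j) := by
    have hq : ψ h = (yj⁻¹ * ψ g)⁻¹ * (yj⁻¹ * ψ (g * h)) := by
      have : ψ (g * h) = ψ g * ψ h := map_mul ψ g h
      rw [this]; group
    calc wlen (ψ h) = wlen ((yj⁻¹ * ψ g)⁻¹ * (yj⁻¹ * ψ (g * h))) := by rw [← hq]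
      _ ≤ wlen ((yj⁻¹ * ψ g)⁻¹) + wlen (yj⁻¹ * ψ (g * h)) := wlen_mul_le _ _
      _ = wlen (yj⁻¹ * ψ g) + wlen (yj⁻¹ * ψ (g * h)) := by rw [wlen_inv]
      _ ≤ S * S + (L - j) := add_le_add k1 k3
  have hfin : wlen (ψ (g * h)) = L := rfl
  omega

end CylProof

namespace CylProof
variable {A : Type*} [Fintype A] [DecidableEq A]
open FreeGroup
set_option linter.unusedSectionVars false

lemma wpre_length (X : ℕ → A × Bool) (n : ℕ) : (wpre X n).length = n := by
  simp [wpre]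

lemma wpre_succ (X : ℕ → A × Bool) (n : ℕ) : wpre X (n + 1) = wpre X n ++ [X n] := by
  simp [wpre, List.range_succ]

lemma wpre_take (X : ℕ → A × Bool) {n m : ℕ} (h : n ≤ m) :
    (wpre X m).take n = wpre X n := by
  simp [wpre, ← List.map_take, List.take_range, Nat.min_eq_left h]

lemma wpre_prefix (X : ℕ → A × Bool) {n m : ℕ} (h : n ≤ m) :
    wpre X n <+: wpre X m := by
  rw [← wpre_take X h]
  exact List.take_prefix n _

lemma redWord_wpre {X : ℕ → A × Bool} (hX : InfRed X) (n : ℕ) : RedWord (wpre X n) := by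
  unfold RedWord wpre List.Chain'
  rw [List.isChain_map]
  cases n with
  | zero => simp
  | succ k =>
    rw [List.isChain_range_succ]
    intro i _
    exact hX i

lemma wlen_g (X : ℕ → A × Bool) (hX : InfRed X) (m : ℕ) :
    wlen (mk (wpre X m)) = m := by
  rw [wlen_mk_red (redWord_wpre hX m), wpre_length]

lemma seg_len (X : ℕ → A × Bool) (hX : InfRed X) {m m' : ℕ} (h : m ≤ m') :
    wlen ((mk (wpre X m))⁻¹ * mk (wpre X m')) = m' - m := by
  rw [wlen_inv_mul_prefix (wpre_prefix X h) (redWord_wpre hX m'), wpre_length, wpre_length]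

lemma stab (ψ : FreeGroup A ≃* FreeGroup A) (S : ℕ)
    (h1 : ∀ g : FreeGroup A, wlen (ψ g) ≤ S * wlen g)
    (h2 : ∀ g : FreeGroup A, wlen (ψ.symm g) ≤ S * wlen g)
    (X : ℕ → A × Bool) (hX : InfRed X) {n m m' : ℕ} (hmm : m ≤ m')
    (hn : n + S * S ≤ wlen (ψ (mk (wpre X m)))) :
    ((ψ (mk (wpre X m'))).toWord).take n = ((ψ (mk (wpre X m))).toWord).take n := by
  have hbc := bounded_cancel ψ S h1 h2 (mk (wpre X m)) ((mk (wpre X m))⁻¹ * mk (wpre X m'))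
    (by
      rw [mul_inv_cancel_left, wlen_g X hX, wlen_g X hX, seg_len X hX hmm]
      omega)
  rw [mul_inv_cancel_left] at hbc
  have hdist : wlen ((ψ (mk (wpre X m')))⁻¹ * ψ (mk (wpre X m)))
      = wlen (ψ ((mk (wpre X m))⁻¹ * mk (wpre X m'))) := by
    rw [← wlen_inv ((ψ (mk (wpre X m')))⁻¹ * ψ (mk (wpre X m))), mul_inv_rev, inv_inv,
      equiv_inv_mul]
  apply take_eq_of_close (redWord_toWord _) (redWord_toWord _)
  rw [mk_toWord, mk_toWord, hdist]
  have e1 : (ψ (mk (wpre X m'))).toWord.length = wlen (ψ (mk (wpre X m'))) := rfl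
  have e2 : (ψ (mk (wpre X m))).toWord.length = wlen (ψ (mk (wpre X m))) := rfl
  omega

lemma grow (ψ : FreeGroup A ≃* FreeGroup A) (S : ℕ)
    (h2 : ∀ g : FreeGroup A, wlen (ψ.symm g) ≤ S * wlen g)
    (X : ℕ → A × Bool) (hX : InfRed X) (m : ℕ) :
    m ≤ S * wlen (ψ (mk (wpre X m))) := by
  have := h2 (ψ (mk (wpre X m)))
  rwa [MulEquiv.symm_apply_apply, wlen_g X hX] at this

lemma wpre_get (X : ℕ → A × Bool) {i m : ℕ} (h : i < m) :
    (wpre X m).getD i (X 0) = X i := by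
  simp [wpre, List.getD_eq_getElem?_getD, List.getElem?_range h]

lemma limit_exists (ψ : FreeGroup A ≃* FreeGroup A) (S : ℕ) (hS : 1 ≤ S)
    (h1 : ∀ g : FreeGroup A, wlen (ψ g) ≤ S * wlen g)
    (h2 : ∀ g : FreeGroup A, wlen (ψ.symm g) ≤ S * wlen g)
    (d : A × Bool) (X : Bdry A) :
    ∃ Y : Bdry A, ∀ n m, S * (n + S * S) ≤ m →
      ((ψ (mk (wpre X.1 m))).toWord).take n = wpre Y.1 n := by
  have hlenP : ∀ n m', S * (n + S * S) ≤ m' → n + S * S ≤ wlen (ψ (mk (wpre X.1 m'))) := by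
    intro n m' hm'
    have hg := grow ψ S h2 X.1 X.2 m'
    have : S * (n + S * S) ≤ S * wlen (ψ (mk (wpre X.1 m'))) := le_trans hm' hg
    exact Nat.le_of_mul_le_mul_left this (by omega)
  have claim1 : ∀ n m, S * (n + S * S) ≤ m →
      ((ψ (mk (wpre X.1 m))).toWord).take n
        = ((ψ (mk (wpre X.1 (S * (n + S * S))))).toWord).take n := by
    intro n m hm
    exact stab ψ S h1 h2 X.1 X.2 hm (hlenP n _ le_rfl)
  set L : ℕ → List (A × Bool) := fun n => ((ψ (mk (wpre X.1 (S * (n + S * S))))).toWord).take n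
    with hLdef
  have hLlen : ∀ n, (L n).length = n := by
    intro n
    rw [hLdef]
    simp only [List.length_take]
    have := hlenP n (S * (n + S * S)) le_rfl
    have e : (ψ (mk (wpre X.1 (S * (n + S * S))))).toWord.length
        = wlen (ψ (mk (wpre X.1 (S * (n + S * S))))) := rfl
    omega
  have hLmono : ∀ n, L n = (L (n + 1)).take n := by
    intro n
    conv_rhs => rw [hLdef]
    simp only [List.take_take, Nat.min_eq_left (Nat.le_succ n)]
    exact (claim1 n (S * ((n + 1) + S * S)) (Nat.mul_le_mul_left S (by omega))).symm
  set Yf : ℕ → A × Bool := fun n => (L (n + 1)).getD n d with hYf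
  have hwpre : ∀ n, wpre Yf n = L n := by
    intro n
    induction n with
    | zero =>
      have h0 := hLlen 0
      rw [List.length_eq_zero_iff] at h0
      simp [wpre, h0]
    | succ n ih =>
      have hlt : n < (L (n + 1)).length := by rw [hLlen]; omega
      have h1' : (L (n + 1)).take (n + 1) = L (n + 1) :=
        List.take_of_length_le (by rw [hLlen])
      have h2' : (L (n + 1)).take (n + 1) = (L (n + 1)).take n ++ [(L (n + 1)).getD n d] := by
        rw [List.take_succ, List.getElem?_eq_getElem hlt]
        simp [List.getD_eq_getElem?_getD, List.getElem?_eq_getElem hlt]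
      rw [wpre_succ, ih, hLmono n, ← h2', h1']
  have hredL : ∀ n, RedWord (L n) := by
    intro n
    rw [hLdef]
    exact (redWord_toWord _).take _
  have hinf : InfRed Yf := by
    intro n
    have hred : RedWord (wpre Yf (n + 2)) := by rw [hwpre]; exact hredL _
    have hc := List.isChain_iff_getElem.mp hred n
      (by rw [wpre_length]; omega)
    have e1 : ∀ (i : ℕ) (h : i < (wpre Yf (n + 2)).length),
        (wpre Yf (n + 2))[i]'h = Yf i := by
      intro i h
      simp [wpre]
    rw [e1, e1] at hc
    exact hc
  refine ⟨⟨Yf, hinf⟩, ?_⟩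
  intro n m hm
  exact (claim1 n m hm).trans (hwpre n).symm

end CylProof

namespace CylProof
variable {A : Type*} [Fintype A] [DecidableEq A]
open FreeGroup
set_option linter.unusedSectionVars false

lemma limmap_unique {f : FreeGroup A → FreeGroup A} {X : ℕ → A × Bool} {Y Y' : Bdry A}
    (hY : LimMap f X Y.1) (hY' : LimMap f X Y'.1) : Y = Y' := by
  apply Subtype.ext
  funext n
  have key : ∀ k, wpre Y.1 k = wpre Y'.1 k := by
    intro k
    obtain ⟨m1, hm1⟩ := hY k
    obtain ⟨m2, hm2⟩ := hY' k
    rw [← hm1 (max m1 m2) (le_max_left _ _), ← hm2 (max m1 m2) (le_max_right _ _)]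
  have h1 := key (n + 1)
  have h2 := key n
  rw [wpre_succ, wpre_succ, h2] at h1
  have := List.append_cancel_left h1
  simpa using this

lemma nat_ivt {f : ℕ → ℕ} {S : ℕ} (h0 : f 0 = 0) (hstep : ∀ t, f (t + 1) ≤ f t + S)
    {c T : ℕ} (hT : c ≤ f T) : ∃ t, c ≤ f t ∧ f t ≤ c + S := by
  have hex : ∃ t, c ≤ f t := ⟨T, hT⟩
  refine ⟨Nat.find hex, Nat.find_spec hex, ?_⟩
  by_cases h0' : Nat.find hex = 0
  · rw [h0', h0]
    omega
  · obtain ⟨t', ht'⟩ := Nat.exists_eq_succ_of_ne_zero h0'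
    have hlt : ¬ c ≤ f t' := Nat.find_min hex (by omega)
    have h2 := hstep t'
    rw [ht']
    simp only [Nat.succ_eq_add_one] at *
    omega

lemma approx_inv (ψ : FreeGroup A ≃* FreeGroup A) (S : ℕ) (hS : 1 ≤ S)
    (h1 : ∀ g : FreeGroup A, wlen (ψ g) ≤ S * wlen g)
    (h2 : ∀ g : FreeGroup A, wlen (ψ.symm g) ≤ S * wlen g)
    (X Y : Bdry A)
    (hXY : ∀ n m, S * (n + S * S) ≤ m →
      ((ψ (mk (wpre X.1 m))).toWord).take n = wpre Y.1 n) :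
    LimMap (fun g => ψ.symm g) Y.1 X.1 := by
  intro n
  set D := S * (S * S + S) with hD
  refine ⟨S * (n + D) + 1, ?_⟩
  intro m hm
  set f : ℕ → ℕ := fun t => wlen (ψ (mk (wpre X.1 t))) with hf
  have hf0 : f 0 = 0 := by
    have : wpre X.1 0 = [] := rfl
    simp [hf, this, ← FreeGroup.one_eq_mk]
  have hstep : ∀ t, f (t + 1) ≤ f t + S := by
    intro t
    have hid : ψ (mk (wpre X.1 (t + 1)))
        = ψ (mk (wpre X.1 t)) * ψ ((mk (wpre X.1 t))⁻¹ * mk (wpre X.1 (t + 1))) := by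
      rw [equiv_inv_mul, mul_inv_cancel_left]
    have hseg : wlen (ψ ((mk (wpre X.1 t))⁻¹ * mk (wpre X.1 (t + 1)))) ≤ S := by
      calc wlen (ψ ((mk (wpre X.1 t))⁻¹ * mk (wpre X.1 (t + 1))))
          ≤ S * wlen ((mk (wpre X.1 t))⁻¹ * mk (wpre X.1 (t + 1))) := h1 _
        _ = S := by rw [seg_len X.1 X.2 (Nat.le_succ t)]; simp
    calc f (t + 1) = wlen (ψ (mk (wpre X.1 (t + 1)))) := rfl
      _ ≤ wlen (ψ (mk (wpre X.1 t)))
          + wlen (ψ ((mk (wpre X.1 t))⁻¹ * mk (wpre X.1 (t + 1)))) := by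
            conv_lhs => rw [hid]
            exact wlen_mul_le _ _
      _ ≤ f t + S := add_le_add le_rfl hseg
  have hT : m + S * S ≤ f (S * ((m + S * S) + S * S)) := by
    have hg := grow ψ S h2 X.1 X.2 (S * ((m + S * S) + S * S))
    have : S * (m + S * S) ≤ S * f (S * ((m + S * S) + S * S)) := by
      calc S * (m + S * S) ≤ S * ((m + S * S) + S * S) := by
            exact Nat.mul_le_mul_left S (by omega)
        _ ≤ S * f (S * ((m + S * S) + S * S)) := hg
    exact Nat.le_of_mul_le_mul_left this (by omega)
  obtain ⟨t, htc, htS⟩ := nat_ivt hf0 hstep hT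
  have hma : ((ψ (mk (wpre X.1 t))).toWord).take m = wpre Y.1 m := by
    have e2 : ((ψ (mk (wpre X.1 (max t (S * (m + S * S)))))).toWord).take m
        = ((ψ (mk (wpre X.1 t))).toWord).take m :=
      stab ψ S h1 h2 X.1 X.2 (le_max_left _ _) htc
    rw [← e2]
    exact hXY m _ (le_max_right _ _)
  have hq : wpre Y.1 m <+: (ψ (mk (wpre X.1 t))).toWord := by
    rw [← hma]
    exact List.take_prefix m _
  have hdq : wlen ((mk (wpre Y.1 m))⁻¹ * ψ (mk (wpre X.1 t))) ≤ S * S + S := by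
    have hpd := wlen_inv_mul_prefix hq (redWord_toWord _)
    rw [mk_toWord] at hpd
    rw [hpd, wpre_length]
    have : (ψ (mk (wpre X.1 t))).toWord.length = f t := rfl
    omega
  have hdz : wlen ((ψ.symm (mk (wpre Y.1 m)))⁻¹ * mk (wpre X.1 t)) ≤ D := by
    have hid : (ψ.symm (mk (wpre Y.1 m)))⁻¹ * mk (wpre X.1 t)
        = ψ.symm ((mk (wpre Y.1 m))⁻¹ * ψ (mk (wpre X.1 t))) := by
      rw [equiv_inv_mul ψ.symm, MulEquiv.symm_apply_apply]
    rw [hid, hD]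
    exact le_trans (h2 _) (Nat.mul_le_mul_left S hdq)
  have hft : f t ≤ S * t := by
    have := h1 (mk (wpre X.1 t))
    rwa [wlen_g X.1 X.2] at this
  have htlarge : n + D ≤ t := by
    have hlt : S * (n + D) < S * t := by
      calc S * (n + D) < m := hm
        _ ≤ f t := le_trans (Nat.le_add_right m (S * S)) htc
        _ ≤ S * t := hft
    have := Nat.lt_of_mul_lt_mul_left hlt
    omega
  have htri : t ≤ wlen (ψ.symm (mk (wpre Y.1 m))) + D := by
    have hid : mk (wpre X.1 t)
        = ψ.symm (mk (wpre Y.1 m)) * ((ψ.symm (mk (wpre Y.1 m)))⁻¹ * mk (wpre X.1 t)) := by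
      group
    calc t = wlen (mk (wpre X.1 t)) := (wlen_g X.1 X.2 t).symm
      _ ≤ wlen (ψ.symm (mk (wpre Y.1 m)))
          + wlen ((ψ.symm (mk (wpre Y.1 m)))⁻¹ * mk (wpre X.1 t)) := by
            conv_lhs => rw [hid]
            exact wlen_mul_le _ _
      _ ≤ wlen (ψ.symm (mk (wpre Y.1 m))) + D := add_le_add le_rfl hdz
  have hfinal : ((ψ.symm (mk (wpre Y.1 m))).toWord).take n = (wpre X.1 t).take n := by
    apply take_eq_of_close (redWord_toWord _) (redWord_wpre X.2 t)
    rw [mk_toWord, wpre_length]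
    have e1 : (ψ.symm (mk (wpre Y.1 m))).toWord.length = wlen (ψ.symm (mk (wpre Y.1 m))) := rfl
    omega
  rw [hfinal]
  exact wpre_take X.1 (by omega)

end CylProof

open CylProof FreeGroup in
theorem image_cylinder_is_finite_union (hA : 2 ≤ Fintype.card A)
    (φ : FreeGroup A ≃* FreeGroup A) (u : FreeGroup A) :
    ∃ U : Finset (FreeGroup A),
      bim (fun g => φ g) (CylF u) = ⋃ u' ∈ U, CylF u' := by
  classical
  have hne : Nonempty A := Fintype.card_pos_iff.mp (by omega)
  obtain ⟨a0⟩ := hne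
  set S := fsize φ with hSdef
  have hbound1 : ∀ a : A, wlen (φ (FreeGroup.of a)) ≤ S := by
    intro a
    have hx : (fun a : A => max (wlen (φ (FreeGroup.of a))) (wlen (φ.symm (FreeGroup.of a)))) a
        ≤ S := by
      simp only [hSdef, fsize]
      exact Finset.le_sup
        (f := fun a : A => max (wlen (φ (FreeGroup.of a))) (wlen (φ.symm (FreeGroup.of a))))
        (Finset.mem_univ a)
    exact le_trans (le_max_left _ _) hx
  have hbound2 : ∀ a : A, wlen (φ.symm (FreeGroup.of a)) ≤ S := by
    intro a
    have hx : (fun a : A => max (wlen (φ (FreeGroup.of a))) (wlen (φ.symm (FreeGroup.of a)))) a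
        ≤ S := by
      simp only [hSdef, fsize]
      exact Finset.le_sup
        (f := fun a : A => max (wlen (φ (FreeGroup.of a))) (wlen (φ.symm (FreeGroup.of a))))
        (Finset.mem_univ a)
    exact le_trans (le_max_right _ _) hx
  have h1 : ∀ g, wlen (φ g) ≤ S * wlen g := fun g => wlen_map_le φ.toMonoidHom hbound1 g
  have h2 : ∀ g, wlen (φ.symm g) ≤ S * wlen g := fun g =>
    wlen_map_le φ.symm.toMonoidHom hbound2 g
  have h1' : ∀ g, wlen (φ.symm.symm g) ≤ S * wlen g := by
    simpa only [MulEquiv.symm_symm] using h1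
  have hS : 1 ≤ S := by
    have hna : φ (FreeGroup.of a0) ≠ 1 := by
      intro hbad
      exact FreeGroup.of_ne_one a0 (φ.injective (hbad.trans (_root_.map_one φ).symm))
    have hz : wlen (φ (FreeGroup.of a0)) ≠ 0 := fun h0 => hna (wlen_eq_zero h0)
    have := hbound1 a0
    omega
  set M := S * (wlen u + S * S) with hM
  set B := bim (fun g => φ g) (CylF u) with hB
  have hfin0 : {v : FreeGroup A | wlen v = M}.Finite := by
    have heq : {v : FreeGroup A | wlen v = M}
        = FreeGroup.toWord ⁻¹' {l : List (A × Bool) | l.length = M} := rfl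
    rw [heq]
    exact (List.finite_length_eq (A × Bool) M).preimage
      (Set.injOn_of_injective FreeGroup.toWord_injective)
  have hfin : {v : FreeGroup A | wlen v = M ∧ CylF v ⊆ B}.Finite :=
    hfin0.subset (fun v hv => hv.1)
  refine ⟨hfin.toFinset, ?_⟩
  apply Set.Subset.antisymm
  · intro Y hY
    obtain ⟨X, hXu, hLXY⟩ := hY
    have hXu' : wpre X.1 (wlen u) = u.toWord := hXu
    obtain ⟨Yh, hYh⟩ := limit_exists φ S hS h1 h2 (a0, true) X
    have hLXYh : LimMap (fun g => φ g) X.1 Yh.1 := fun n =>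
      ⟨S * (n + S * S), fun m hm => hYh n m hm⟩
    have hYeq : Y = Yh := limmap_unique hLXY hLXYh
    rw [← hYeq] at hYh
    obtain ⟨X', hX'⟩ := limit_exists φ.symm S hS h2 h1' (a0, true) Y
    have hLYX : LimMap (fun g => φ.symm g) Y.1 X.1 := approx_inv φ S hS h1 h2 X Y hYh
    have hLYX' : LimMap (fun g => φ.symm g) Y.1 X'.1 := fun n =>
      ⟨S * (n + S * S), fun m hm => hX' n m hm⟩
    have hXX' : X = X' := limmap_unique hLYX hLYX'
    set v := mk (wpre Y.1 M) with hv
    have hvred := redWord_wpre Y.2 M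
    have hvlen : wlen v = M := by rw [hv, wlen_mk_red hvred, wpre_length]
    have hvto : v.toWord = wpre Y.1 M := toWord_mk_red hvred
    have hYv : Y ∈ CylF v := by
      show wpre Y.1 (wlen v) = v.toWord
      rw [hvlen, hvto]
    have hsub : CylF v ⊆ B := by
      intro Y'' hY''
      have hYY'' : wpre Y''.1 M = wpre Y.1 M := by
        have h0 : wpre Y''.1 (wlen v) = v.toWord := hY''
        rw [hvlen, hvto] at h0
        exact h0
      obtain ⟨X'', hX''⟩ := limit_exists φ.symm S hS h2 h1' (a0, true) Y''
      refine ⟨X'', ?_, ?_⟩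
      · show wpre X''.1 (wlen u) = u.toWord
        have e1 : ((φ.symm (mk (wpre Y''.1 M))).toWord).take (wlen u) = wpre X''.1 (wlen u) :=
          hX'' (wlen u) M (le_of_eq hM.symm)
        have e2 : ((φ.symm (mk (wpre Y.1 M))).toWord).take (wlen u) = wpre X'.1 (wlen u) :=
          hX' (wlen u) M (le_of_eq hM.symm)
        rw [← e1, hYY'', e2, ← hXX']
        exact hXu'
      · have hlm := approx_inv φ.symm S hS h2 h1' Y'' X'' hX''
        simpa only [MulEquiv.symm_symm] using hlm
    refine Set.mem_iUnion.mpr ⟨v, Set.mem_iUnion.mpr ⟨?_, hYv⟩⟩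
    rw [Set.Finite.mem_toFinset]
    exact ⟨hvlen, hsub⟩
  · intro Y hY
    obtain ⟨v, hvU, hYv⟩ := Set.mem_iUnion₂.mp hY
    rw [Set.Finite.mem_toFinset] at hvU
    exact hvU.2 hYv
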